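/- Let A, B ⊆ ℝ^d = ℝ × ℝ^{d-1} be compact sets, t ∈ (0,1), and S = tA + (1-t)B. Then for any λ > 0 and γ, γ̃ > 0 with γ^t γ̃^{1-t} = 1, |{x ∈ ℝ : |S_x| > λ}| ≥ t·|{x : |A_x| > γλ}| + (1-t)·|{x : |B_x| > γ̃λ}| whenever both sets on the right are nonempty. -/

import Mathlib

open MeasureTheory Set
open scoped Pointwise ENNReal NNReal

lemma compact1d (K L : Set ℝ) (hK : IsCompact K) (hL : IsCompact L)
    (hKne : K.Nonempty) (hLne : L.Nonempty) :
    volume K + volume L ≤ volume (K + L) := by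
  set a := sSup K with ha
  set b := sInf L with hb
  have haK : a ∈ K := hK.sSup_mem hKne
  have hbL : b ∈ L := hL.sInf_mem hLne
  set P : Set ℝ := (· + b) '' K with hP
  set Q : Set ℝ := (a + ·) '' L with hQ
  have hPK : volume P = volume K := by
    rw [hP, Set.image_add_right, measure_preimage_add_right]
  have hQL : volume Q = volume L := by
    rw [hQ, Set.image_add_left, measure_preimage_add]
  have hQm : MeasurableSet Q := ((hL.image (continuous_add_left a)).isClosed).measurableSet
  have hsub : P ∪ Q ⊆ K + L := by
    rintro x (⟨k, hk, rfl⟩ | ⟨l, hl, rfl⟩)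
    · exact add_mem_add hk hbL
    · exact add_mem_add haK hl
  have hinter : volume (P ∩ Q) = 0 := by
    have : P ∩ Q ⊆ {a + b} := by
      rintro x ⟨⟨k, hk, rfl⟩, ⟨l, hl, hkl⟩⟩
      have h1 : k ≤ a := le_csSup hK.bddAbove hk
      have h2 : b ≤ l := csInf_le hL.bddBelow hl
      simp only at hkl
      have : k + b = a + b := by linarith
      simp [this]
    exact measure_mono_null this (measure_singleton _)
  calc volume K + volume L = volume P + volume Q := by rw [hPK, hQL]
    _ = volume (P ∪ Q) + volume (P ∩ Q) := (measure_union_add_inter P hQm).symm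
    _ = volume (P ∪ Q) := by rw [hinter, add_zero]
    _ ≤ volume (K + L) := measure_mono hsub

lemma onedim (U V : Set ℝ) (hU : MeasurableSet U) (hV : MeasurableSet V)
    (hUne : U.Nonempty) (hVne : V.Nonempty) :
    volume U + volume V ≤ volume (U + V) := by
  obtain ⟨u, hu⟩ := hUne
  obtain ⟨v, hv⟩ := hVne
  -- infinite cases
  by_cases hUinf : volume U = ∞
  · have : volume (U + V) = ∞ := by
      refine top_le_iff.mp ?_
      calc (⊤ : ℝ≥0∞) = volume U := hUinf.symm
        _ = volume ((· + v) '' U) := by rw [Set.image_add_right, measure_preimage_add_right]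
        _ ≤ volume (U + V) := measure_mono (by rintro x ⟨y, hy, rfl⟩; exact add_mem_add hy hv)
    rw [this]; exact le_top
  by_cases hVinf : volume V = ∞
  · have : volume (U + V) = ∞ := by
      refine top_le_iff.mp ?_
      calc (⊤ : ℝ≥0∞) = volume V := hVinf.symm
        _ = volume ((u + ·) '' V) := by rw [Set.image_add_left, measure_preimage_add]
        _ ≤ volume (U + V) := measure_mono (by rintro x ⟨y, hy, rfl⟩; exact add_mem_add hu hy)
    rw [this]; exact le_top
  refine ENNReal.le_of_forall_pos_le_add fun ε hε _ => ?_
  have hε2 : ((ε : ℝ≥0∞) / 2) ≠ 0 := by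
    simp [ENNReal.div_eq_zero_iff, (by exact_mod_cast hε.ne' : (ε:ℝ≥0∞) ≠ 0)]
  obtain ⟨K, hKU, hKc, hKv⟩ := hU.exists_isCompact_lt_add hUinf hε2
  obtain ⟨L, hLV, hLc, hLv⟩ := hV.exists_isCompact_lt_add hVinf hε2
  set K' := K ∪ {u} with hK'
  set L' := L ∪ {v} with hL'
  have hK'c : IsCompact K' := hKc.union isCompact_singleton
  have hL'c : IsCompact L' := hLc.union isCompact_singleton
  have hK'U : K' ⊆ U := union_subset hKU (by simpa using hu)
  have hL'V : L' ⊆ V := union_subset hLV (by simpa using hv)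
  have key := compact1d K' L' hK'c hL'c (by simp [hK']) (by simp [hL'])
  have h1 : volume U < volume K' + ε / 2 :=
    lt_of_lt_of_le hKv (add_le_add_left (measure_mono subset_union_left) _)
  have h2 : volume V < volume L' + ε / 2 :=
    lt_of_lt_of_le hLv (add_le_add_left (measure_mono subset_union_left) _)
  calc volume U + volume V ≤ (volume K' + ε/2) + (volume L' + ε/2) :=
        add_le_add h1.le h2.le
    _ = (volume K' + volume L') + ε := by
        rw [show (volume K' + ε/2) + (volume L' + ε/2) = (volume K' + volume L') + (ε/2 + ε/2) by ring,
          ENNReal.add_halves]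
    _ ≤ volume (K' + L') + ε := add_le_add_left key _
    _ ≤ volume (U + V) + ε := add_le_add_left (measure_mono (add_subset_add hK'U hL'V)) _

/-- Multiplicative Brunn–Minkowski in `Fin n → ℝ`. -/
def BMdim (n : ℕ) : Prop := ∀ (C D : Set (Fin n → ℝ)), IsCompact C → IsCompact D →
    C.Nonempty → D.Nonempty → ∀ t : ℝ, t ∈ Set.Ioo (0:ℝ) 1 →
    volume C ^ t * volume D ^ (1-t) ≤ volume (t • C + (1-t) • D)

lemma slice_compact {n : ℕ} {A : Set (ℝ × (Fin n → ℝ))} (hA : IsCompact A) (x : ℝ) :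
    IsCompact {y | (x, y) ∈ A} := by
  have hcl : IsClosed {y | (x, y) ∈ A} :=
    hA.isClosed.preimage (Continuous.prodMk_right x)
  refine (hA.image continuous_snd).of_isClosed_subset hcl ?_
  intro y hy
  exact ⟨(x, y), hy, rfl⟩

lemma slice_meas {n : ℕ} {A : Set (ℝ × (Fin n → ℝ))} (hA : MeasurableSet A) :
    Measurable fun x : ℝ => volume {y | (x, y) ∈ A} :=
  measurable_measure_prodMk_left hA

lemma sliceLemma (n : ℕ) (bm : BMdim n) (A B : Set (ℝ × (Fin n → ℝ))) (t : ℝ)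
    (ht : t ∈ Set.Ioo (0:ℝ) 1)
    (hA : IsCompact A) (hB : IsCompact B)
    (lam γ γt : ℝ) (hlam : 0 < lam) (hγ : 0 < γ) (hγt : 0 < γt)
    (hnorm : γ ^ t * γt ^ (1 - t) = 1)
    (hAne : {x : ℝ | ENNReal.ofReal (γ * lam) < volume {y | (x, y) ∈ A}}.Nonempty)
    (hBne : {x : ℝ | ENNReal.ofReal (γt * lam) < volume {y | (x, y) ∈ B}}.Nonempty) :
    ENNReal.ofReal t * volume {x : ℝ | ENNReal.ofReal (γ * lam) < volume {y | (x, y) ∈ A}}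
      + ENNReal.ofReal (1 - t) *
        volume {x : ℝ | ENNReal.ofReal (γt * lam) < volume {y | (x, y) ∈ B}}
    ≤ volume {x : ℝ | ENNReal.ofReal lam < volume {y | (x, y) ∈ t • A + (1 - t) • B}} := by
  obtain ⟨ht0, ht1⟩ := ht
  have ht1' : 0 < 1 - t := by linarith
  set UA := {x : ℝ | ENNReal.ofReal (γ * lam) < volume {y | (x, y) ∈ A}} with hUA
  set UB := {x : ℝ | ENNReal.ofReal (γt * lam) < volume {y | (x, y) ∈ B}} with hUB
  set US := {x : ℝ | ENNReal.ofReal lam < volume {y | (x, y) ∈ t • A + (1 - t) • B}} with hUS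
  -- measurability of UA, UB
  have hUAm : MeasurableSet UA :=
    measurableSet_lt measurable_const (slice_meas hA.isClosed.measurableSet)
  have hUBm : MeasurableSet UB :=
    measurableSet_lt measurable_const (slice_meas hB.isClosed.measurableSet)
  -- the key inclusion
  have hincl : t • UA + (1 - t) • UB ⊆ US := by
    rintro z ⟨-, ⟨x, hx, rfl⟩, -, ⟨x', hx', rfl⟩, rfl⟩
    have hAx : ENNReal.ofReal (γ * lam) < volume {y | (x, y) ∈ A} := hx
    have hBx : ENNReal.ofReal (γt * lam) < volume {y | (x', y) ∈ B} := hx'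
    -- slices are compact and nonempty
    have hAxne : {y | (x, y) ∈ A}.Nonempty :=
      nonempty_iff_ne_empty.mpr (fun h => by rw [h] at hAx; simp at hAx)
    have hBxne : {y | (x', y) ∈ B}.Nonempty :=
      nonempty_iff_ne_empty.mpr (fun h => by rw [h] at hBx; simp at hBx)
    -- slice sum inclusion
    have hsl : t • {y | (x, y) ∈ A} + (1 - t) • {y | (x', y) ∈ B}
        ⊆ {y | (t • x + (1 - t) • x', y) ∈ t • A + (1 - t) • B} := by
      rintro w ⟨-, ⟨a, ha, rfl⟩, -, ⟨b, hb, rfl⟩, rfl⟩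
      exact ⟨t • (x, a), ⟨(x, a), ha, rfl⟩, (1 - t) • (x', b), ⟨(x', b), hb, rfl⟩, rfl⟩
    have hbm := bm _ _ (slice_compact hA x) (slice_compact hB x') hAxne hBxne t ⟨ht0, ht1⟩
    have key : ENNReal.ofReal lam <
        volume {y | (t • x + (1 - t) • x', y) ∈ t • A + (1 - t) • B} := by
      refine lt_of_lt_of_le ?_ ((le_trans hbm (measure_mono hsl)))
      have heq : ENNReal.ofReal lam
          = ENNReal.ofReal (γ * lam) ^ t * ENNReal.ofReal (γt * lam) ^ (1 - t) := by
        rw [ENNReal.ofReal_rpow_of_pos (by positivity),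
          ENNReal.ofReal_rpow_of_pos (by positivity), ← ENNReal.ofReal_mul (by positivity)]
        congr 1
        symm
        rw [Real.mul_rpow hγ.le hlam.le, Real.mul_rpow hγt.le hlam.le]
        calc γ ^ t * lam ^ t * (γt ^ (1-t) * lam ^ (1-t))
            = (γ ^ t * γt ^ (1-t)) * (lam ^ t * lam ^ (1-t)) := by ring
          _ = lam := by
              rw [hnorm, one_mul, ← Real.rpow_add hlam]
              norm_num
      rw [heq]
      have h1 : ENNReal.ofReal (γ * lam) ^ t < volume {y | (x, y) ∈ A} ^ t :=
        ENNReal.rpow_lt_rpow hAx ht0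
      have hk0 : ENNReal.ofReal (γt * lam) ^ (1 - t) ≠ 0 :=
        (ENNReal.rpow_pos (ENNReal.ofReal_pos.mpr (by positivity)) ENNReal.ofReal_ne_top).ne'
      have hktop : ENNReal.ofReal (γt * lam) ^ (1 - t) ≠ ⊤ :=
        ENNReal.rpow_ne_top_of_nonneg ht1'.le ENNReal.ofReal_ne_top
      calc ENNReal.ofReal (γ * lam) ^ t * ENNReal.ofReal (γt * lam) ^ (1 - t)
          < volume {y | (x, y) ∈ A} ^ t * ENNReal.ofReal (γt * lam) ^ (1 - t) :=
            ENNReal.mul_lt_mul_left hk0 hktop h1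
        _ ≤ volume {y | (x, y) ∈ A} ^ t * volume {y | (x', y) ∈ B} ^ (1 - t) :=
            mul_le_mul_right (ENNReal.rpow_le_rpow hBx.le ht1'.le) _
    exact key
  -- put it together
  have h1 : volume (t • UA) = ENNReal.ofReal t * volume UA := by
    rw [Measure.addHaar_smul_of_nonneg volume ht0.le, Module.finrank_self, pow_one]
  have h2 : volume ((1 - t) • UB) = ENNReal.ofReal (1 - t) * volume UB := by
    rw [Measure.addHaar_smul_of_nonneg volume ht1'.le, Module.finrank_self, pow_one]
  calc ENNReal.ofReal t * volume UA + ENNReal.ofReal (1 - t) * volume UB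
      = volume (t • UA) + volume ((1 - t) • UB) := by rw [h1, h2]
    _ ≤ volume (t • UA + (1 - t) • UB) :=
        onedim _ _ (hUAm.const_smul₀ t) (hUBm.const_smul₀ (1 - t))
          (hAne.smul_set) (hBne.smul_set)
    _ ≤ volume US := measure_mono hincl

lemma slice_meas' {n : ℕ} {A : Set (ℝ × (Fin n → ℝ))} (hA : MeasurableSet A) :
    Measurable fun x : ℝ => volume {y | (x, y) ∈ A} :=
  measurable_measure_prodMk_left hA

lemma slice_ne_top {n : ℕ} {A : Set (ℝ × (Fin n → ℝ))} (hA : IsCompact A) (x : ℝ) :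
    volume {y | (x, y) ∈ A} ≠ ⊤ := by
  refine (lt_of_le_of_lt (measure_mono ?_) (hA.image continuous_snd).measure_lt_top).ne
  rintro y hy; exact ⟨(x, y), hy, rfl⟩

lemma vol_eq_lint {n : ℕ} {A : Set (ℝ × (Fin n → ℝ))} (hA : MeasurableSet A) :
    volume A = ∫⁻ x : ℝ, volume {y | (x, y) ∈ A} := by
  rw [Measure.volume_eq_prod, Measure.prod_apply hA]; rfl

/-- ENNReal weighted AM-GM for two terms. -/
lemma engm {w1 w2 : ℝ} (a b : ℝ≥0∞) (ha : a ≠ ⊤) (hb : b ≠ ⊤) (hw1 : 0 ≤ w1) (hw2 : 0 ≤ w2)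
    (hw : w1 + w2 = 1) : a ^ w1 * b ^ w2 ≤ ENNReal.ofReal w1 * a + ENNReal.ofReal w2 * b := by
  lift a to ℝ≥0 using ha
  lift b to ℝ≥0 using hb
  have key := NNReal.geom_mean_le_arith_mean2_weighted w1.toNNReal w2.toNNReal a b ?_
  · rw [← ENNReal.coe_rpow_of_nonneg a hw1, ← ENNReal.coe_rpow_of_nonneg b hw2,
      ENNReal.ofReal, ENNReal.ofReal, ← ENNReal.coe_mul, ← ENNReal.coe_mul, ← ENNReal.coe_mul,
      ← ENNReal.coe_add, ENNReal.coe_le_coe]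
    have h1 : (w1.toNNReal : ℝ) = w1 := Real.coe_toNNReal _ hw1
    have h2 : (w2.toNNReal : ℝ) = w2 := Real.coe_toNNReal _ hw2
    rw [h1, h2] at key
    exact key
  · have := Real.toNNReal_add hw1 hw2
    rw [hw] at this
    rw [← this]
    simp

lemma layercake_div (F : ℝ → ℝ) (ρ : ℝ) (hFm : Measurable F) (hFnn : ∀ x, 0 ≤ F x)
    (hρ : 0 < ρ) :
    ∫⁻ l in Ioi (0:ℝ), volume {x | l < F x / ρ}
      = ENNReal.ofReal (1/ρ) * ∫⁻ x, ENNReal.ofReal (F x) := by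
  rw [← lintegral_eq_lintegral_meas_lt volume
    (Filter.Eventually.of_forall (fun x => div_nonneg (hFnn x) hρ.le))
    (hFm.div_const ρ).aemeasurable]
  rw [← lintegral_const_mul _ hFm.ennreal_ofReal]
  congr 1
  ext x
  rw [← ENNReal.ofReal_mul (by positivity), one_div, div_eq_inv_mul]

lemma bm_step (n : ℕ) (bm : BMdim n) (C D : Set (ℝ × (Fin n → ℝ)))
    (hC : IsCompact C) (hD : IsCompact D) (hCne : C.Nonempty) (hDne : D.Nonempty)
    (t : ℝ) (ht : t ∈ Set.Ioo (0:ℝ) 1) :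
    volume C ^ t * volume D ^ (1-t) ≤ volume (t • C + (1-t) • D) := by
  obtain ⟨ht0, ht1⟩ := ht
  have ht1' : 0 < 1 - t := by linarith
  by_cases hc0 : volume C = 0
  · rw [hc0, ENNReal.zero_rpow_of_pos ht0, zero_mul]; exact zero_le
  by_cases hd0 : volume D = 0
  · rw [hd0, ENNReal.zero_rpow_of_pos ht1', mul_zero]; exact zero_le
  have hCm : MeasurableSet C := hC.isClosed.measurableSet
  have hDm : MeasurableSet D := hD.isClosed.measurableSet
  have hS : IsCompact (t • C + (1 - t) • D) := (hC.smul t).add (hD.smul (1 - t))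
  have hSm : MeasurableSet (t • C + (1 - t) • D) := hS.isClosed.measurableSet
  set f : ℝ → ℝ≥0∞ := fun x => volume {y | (x, y) ∈ C} with hf
  set g : ℝ → ℝ≥0∞ := fun x => volume {y | (x, y) ∈ D} with hg
  set h : ℝ → ℝ≥0∞ := fun x => volume {y | (x, y) ∈ t • C + (1 - t) • D} with hh
  have hfm : Measurable f := slice_meas' hCm
  have hgm : Measurable g := slice_meas' hDm
  have hhm : Measurable h := slice_meas' hSm
  have hftop : ∀ x, f x ≠ ⊤ := slice_ne_top hC
  have hgtop : ∀ x, g x ≠ ⊤ := slice_ne_top hD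
  have hhtop : ∀ x, h x ≠ ⊤ := slice_ne_top hS
  set F : ℝ → ℝ := fun x => (f x).toReal with hF
  set G : ℝ → ℝ := fun x => (g x).toReal with hG
  set H : ℝ → ℝ := fun x => (h x).toReal with hH
  have hFm : Measurable F := hfm.ennreal_toReal
  have hGm : Measurable G := hgm.ennreal_toReal
  have hHm : Measurable H := hhm.ennreal_toReal
  have hFnn : ∀ x, 0 ≤ F x := fun x => ENNReal.toReal_nonneg
  have hGnn : ∀ x, 0 ≤ G x := fun x => ENNReal.toReal_nonneg
  have hHnn : ∀ x, 0 ≤ H x := fun x => ENNReal.toReal_nonneg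
  have hFbdd : BddAbove (range F) := by
    refine ⟨(volume (Prod.snd '' C)).toReal, ?_⟩
    rintro - ⟨x, rfl⟩
    exact ENNReal.toReal_mono (hC.image continuous_snd).measure_lt_top.ne
      (measure_mono (fun y hy => ⟨(x, y), hy, rfl⟩))
  have hGbdd : BddAbove (range G) := by
    refine ⟨(volume (Prod.snd '' D)).toReal, ?_⟩
    rintro - ⟨x, rfl⟩
    exact ENNReal.toReal_mono (hD.image continuous_snd).measure_lt_top.ne
      (measure_mono (fun y hy => ⟨(x, y), hy, rfl⟩))
  set MA := ⨆ x, F x with hMA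
  set MB := ⨆ x, G x with hMB
  have hFle : ∀ x, F x ≤ MA := fun x => le_ciSup hFbdd x
  have hGle : ∀ x, G x ≤ MB := fun x => le_ciSup hGbdd x
  have hMA0 : 0 < MA := by
    by_contra hle
    push_neg at hle
    apply hc0
    rw [vol_eq_lint hCm]
    rw [show (fun x : ℝ => volume {y | (x, y) ∈ C}) = f from rfl]
    rw [lintegral_eq_zero_iff hfm]
    refine Filter.Eventually.of_forall (fun x => ?_)
    have hzero : F x = 0 := le_antisymm ((hFle x).trans hle) (hFnn x)
    rcases (ENNReal.toReal_eq_zero_iff _).mp hzero with h1 | h1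
    · exact h1
    · exact absurd h1 (hftop x)
  have hMB0 : 0 < MB := by
    by_contra hle
    push_neg at hle
    apply hd0
    rw [vol_eq_lint hDm]
    rw [show (fun x : ℝ => volume {y | (x, y) ∈ D}) = g from rfl]
    rw [lintegral_eq_zero_iff hgm]
    refine Filter.Eventually.of_forall (fun x => ?_)
    have hzero : G x = 0 := le_antisymm ((hGle x).trans hle) (hGnn x)
    rcases (ENNReal.toReal_eq_zero_iff _).mp hzero with h1 | h1
    · exact h1
    · exact absurd h1 (hgtop x)
  set m := MA ^ t * MB ^ (1 - t) with hm
  have hm0 : 0 < m := by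
    rw [hm]; positivity
  set γ : ℝ := MA / m with hγ
  set γ' : ℝ := MB / m with hγ'
  have hγ0 : 0 < γ := div_pos hMA0 hm0
  have hγ'0 : 0 < γ' := div_pos hMB0 hm0
  have hnorm : γ ^ t * γ' ^ (1 - t) = 1 := by
    rw [hγ, hγ', Real.div_rpow hMA0.le hm0.le, Real.div_rpow hMB0.le hm0.le,
      div_mul_div_comm, ← Real.rpow_add hm0, (by ring : t + (1 - t) = 1), Real.rpow_one, ← hm]
    exact div_self hm0.ne'
  have hγm : γ * m = MA := by rw [hγ]; exact div_mul_cancel₀ _ hm0.ne'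
  have hγ'm : γ' * m = MB := by rw [hγ']; exact div_mul_cancel₀ _ hm0.ne'
  -- set identities
  have hsetA : ∀ l : ℝ, 0 < l → {x | l < F x / γ}
      = {x : ℝ | ENNReal.ofReal (γ * l) < volume {y | (x, y) ∈ C}} := by
    intro l hl
    ext x
    rw [mem_setOf_eq, mem_setOf_eq, lt_div_iff₀ hγ0, mul_comm,
      ENNReal.ofReal_lt_iff_lt_toReal (by positivity) (hftop x)]
  have hsetB : ∀ l : ℝ, 0 < l → {x | l < G x / γ'}
      = {x : ℝ | ENNReal.ofReal (γ' * l) < volume {y | (x, y) ∈ D}} := by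
    intro l hl
    ext x
    rw [mem_setOf_eq, mem_setOf_eq, lt_div_iff₀ hγ'0, mul_comm,
      ENNReal.ofReal_lt_iff_lt_toReal (by positivity) (hgtop x)]
  have hsetS : ∀ l : ℝ, 0 < l → {x | l < H x}
      = {x : ℝ | ENNReal.ofReal l < volume {y | (x, y) ∈ t • C + (1 - t) • D}} := by
    intro l hl
    ext x
    rw [mem_setOf_eq, mem_setOf_eq, ENNReal.ofReal_lt_iff_lt_toReal hl.le (hhtop x)]
  -- pointwise inequality
  have hps : ∀ l : ℝ, l ∈ Ioi (0:ℝ) →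
      ENNReal.ofReal t * volume {x | l < F x / γ}
        + ENNReal.ofReal (1 - t) * volume {x | l < G x / γ'}
      ≤ volume {x | l < H x} := by
    intro l hl
    rw [mem_Ioi] at hl
    by_cases hcase : l < m
    · have hAne : {x : ℝ | ENNReal.ofReal (γ * l) < volume {y | (x, y) ∈ C}}.Nonempty := by
        rw [← hsetA l hl]
        have hlt : γ * l < MA := by
          rw [← hγm]
          exact (mul_lt_mul_iff_right₀ hγ0).mpr hcase
        obtain ⟨x, hx⟩ := (lt_ciSup_iff hFbdd).mp hlt
        exact ⟨x, by simp only [mem_setOf_eq]; rw [lt_div_iff₀ hγ0, mul_comm]; exact hx⟩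
      have hBne : {x : ℝ | ENNReal.ofReal (γ' * l) < volume {y | (x, y) ∈ D}}.Nonempty := by
        rw [← hsetB l hl]
        have hlt : γ' * l < MB := by
          rw [← hγ'm]
          exact (mul_lt_mul_iff_right₀ hγ'0).mpr hcase
        obtain ⟨x, hx⟩ := (lt_ciSup_iff hGbdd).mp hlt
        exact ⟨x, by simp only [mem_setOf_eq]; rw [lt_div_iff₀ hγ'0, mul_comm]; exact hx⟩
      have := sliceLemma n bm C D t ⟨ht0, ht1⟩ hC hD l γ γ' hl hγ0 hγ'0 hnorm hAne hBne
      rw [hsetA l hl, hsetB l hl, hsetS l hl]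
      exact this
    · push_neg at hcase
      have hemptyA : {x | l < F x / γ} = (∅ : Set ℝ) := by
        ext x
        simp only [mem_setOf_eq, mem_empty_iff_false, iff_false, not_lt]
        calc F x / γ ≤ MA / γ := by gcongr; exact hFle x
          _ = m := by rw [hγ]; field_simp
          _ ≤ l := hcase
      have hemptyB : {x | l < G x / γ'} = (∅ : Set ℝ) := by
        ext x
        simp only [mem_setOf_eq, mem_empty_iff_false, iff_false, not_lt]
        calc G x / γ' ≤ MB / γ' := by gcongr; exact hGle x
          _ = m := by rw [hγ']; field_simp
          _ ≤ l := hcase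
      rw [hemptyA, hemptyB]
      simp
  -- measurability of the superlevel-measure functions
  have hantiA : Antitone fun l : ℝ => volume {x | l < F x / γ} :=
    fun a b hab => measure_mono (fun x hx => lt_of_le_of_lt hab hx)
  have hantiB : Antitone fun l : ℝ => volume {x | l < G x / γ'} :=
    fun a b hab => measure_mono (fun x hx => lt_of_le_of_lt hab hx)
  -- integrate
  have hintC : ∫⁻ l in Ioi (0:ℝ), volume {x | l < F x / γ}
      = ENNReal.ofReal (1/γ) * volume C := by
    rw [layercake_div F γ hFm hFnn hγ0]
    congr 1
    rw [vol_eq_lint hCm]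
    exact lintegral_congr (fun x => ENNReal.ofReal_toReal (hftop x))
  have hintD : ∫⁻ l in Ioi (0:ℝ), volume {x | l < G x / γ'}
      = ENNReal.ofReal (1/γ') * volume D := by
    rw [layercake_div G γ' hGm hGnn hγ'0]
    congr 1
    rw [vol_eq_lint hDm]
    exact lintegral_congr (fun x => ENNReal.ofReal_toReal (hgtop x))
  have hintS : ∫⁻ l in Ioi (0:ℝ), volume {x | l < H x}
      = volume (t • C + (1 - t) • D) := by
    have := layercake_div H 1 hHm hHnn one_pos
    simp only [div_one, ENNReal.ofReal_one, one_mul] at this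
    rw [this, vol_eq_lint hSm]
    exact lintegral_congr (fun x => ENNReal.ofReal_toReal (hhtop x))
  have hbig : ENNReal.ofReal t * (ENNReal.ofReal (1/γ) * volume C)
      + ENNReal.ofReal (1 - t) * (ENNReal.ofReal (1/γ') * volume D)
      ≤ volume (t • C + (1 - t) • D) := by
    have hantiS : Antitone fun l : ℝ => volume {x | l < H x} :=
      fun a b hab => measure_mono (fun x hx => lt_of_le_of_lt hab hx)
    rw [← hintC, ← hintD, ← hintS,
      ← lintegral_const_mul _ hantiA.measurable,
      ← lintegral_const_mul _ hantiB.measurable,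
      ← lintegral_add_left ((hantiA.measurable).const_mul _)]
    exact setLIntegral_mono hantiS.measurable hps
  have hone : ENNReal.ofReal (1/γ) ^ t * ENNReal.ofReal (1/γ') ^ (1 - t) = 1 := by
    rw [ENNReal.ofReal_rpow_of_pos (by positivity), ENNReal.ofReal_rpow_of_pos (by positivity),
      ← ENNReal.ofReal_mul (by positivity)]
    have hre : (1/γ) ^ t * (1/γ') ^ (1 - t) = 1 := by
      rw [Real.div_rpow zero_le_one hγ0.le, Real.div_rpow zero_le_one hγ'0.le,
        Real.one_rpow, Real.one_rpow, div_mul_div_comm, one_mul, hnorm, div_one]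
    rw [hre, ENNReal.ofReal_one]
  have haT : ENNReal.ofReal (1/γ) * volume C ≠ ⊤ :=
    ENNReal.mul_ne_top ENNReal.ofReal_ne_top hC.measure_lt_top.ne
  have hbT : ENNReal.ofReal (1/γ') * volume D ≠ ⊤ :=
    ENNReal.mul_ne_top ENNReal.ofReal_ne_top hD.measure_lt_top.ne
  have hgm2 := engm (ENNReal.ofReal (1/γ) * volume C) (ENNReal.ofReal (1/γ') * volume D)
    haT hbT ht0.le ht1'.le (by ring)
  have hkey : (ENNReal.ofReal (1/γ) * volume C) ^ t * (ENNReal.ofReal (1/γ') * volume D) ^ (1-t)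
      = volume C ^ t * volume D ^ (1-t) := by
    rw [ENNReal.mul_rpow_of_nonneg _ _ ht0.le, ENNReal.mul_rpow_of_nonneg _ _ ht1'.le,
      mul_mul_mul_comm, hone, one_mul]
  rw [← hkey]
  exact le_trans hgm2 hbig

lemma bm_zero : BMdim 0 := by
  intro C D hC hD hCne hDne t ht
  have h3 : t • C + (1 - t) • D = univ := (hCne.smul_set.add hDne.smul_set).eq_univ
  have h1 : C = univ := hCne.eq_univ
  have h2 : D = univ := hDne.eq_univ
  rw [h3, h1, h2]
  have huniv : volume (univ : Set (Fin 0 → ℝ)) = 1 := by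
    simp [MeasureTheory.volume_pi, Measure.pi_univ]
  rw [huniv, ENNReal.one_rpow, ENNReal.one_rpow, one_mul]

lemma bm_succ (n : ℕ) (bm : BMdim n) : BMdim (n + 1) := by
  intro C D hC hD hCne hDne t ht
  set e := MeasurableEquiv.piFinSuccAbove (fun _ : Fin (n+1) => ℝ) 0 with he
  have hmp : MeasurePreserving e :=
    volume_preserving_piFinSuccAbove (fun _ : Fin (n+1) => ℝ) 0
  have hadd : ∀ a b : Fin (n+1) → ℝ, e (a + b) = e a + e b := fun a b => rfl
  have hsmul : ∀ (r : ℝ) (a : Fin (n+1) → ℝ), e (r • a) = r • e a := fun r a => rfl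
  have hcont : Continuous e := by
    show Continuous fun f : Fin (n+1) → ℝ => ((f 0, fun j => f (Fin.succAbove 0 j)) :
      ℝ × (Fin n → ℝ))
    exact (continuous_apply 0).prodMk (continuous_pi fun j => continuous_apply _)
  have hvol : ∀ s : Set (Fin (n+1) → ℝ), MeasurableSet s → volume (e '' s) = volume s := by
    intro s hs
    rw [MeasurableEquiv.image_eq_preimage_symm]
    exact (MeasurePreserving.symm e hmp).measure_preimage hs.nullMeasurableSet
  have himg_add : ∀ s s' : Set (Fin (n+1) → ℝ), e '' (s + s') = e '' s + e '' s' := by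
    intro s s'
    ext z
    constructor
    · rintro ⟨w, ⟨a, ha, b, hb, rfl⟩, rfl⟩
      exact ⟨e a, ⟨a, ha, rfl⟩, e b, ⟨b, hb, rfl⟩, (hadd a b).symm⟩
    · rintro ⟨-, ⟨a, ha, rfl⟩, -, ⟨b, hb, rfl⟩, rfl⟩
      exact ⟨a + b, ⟨a, ha, b, hb, rfl⟩, hadd a b⟩
  have himg_smul : ∀ (r : ℝ) (s : Set (Fin (n+1) → ℝ)), e '' (r • s) = r • (e '' s) := by
    intro r s
    ext z
    constructor
    · rintro ⟨w, ⟨a, ha, rfl⟩, rfl⟩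
      exact ⟨e a, ⟨a, ha, rfl⟩, (hsmul r a).symm⟩
    · rintro ⟨-, ⟨a, ha, rfl⟩, rfl⟩
      exact ⟨r • a, ⟨a, ha, rfl⟩, hsmul r a⟩
  have hC' : IsCompact (e '' C) := hC.image hcont
  have hD' : IsCompact (e '' D) := hD.image hcont
  have hS : IsCompact (t • C + (1 - t) • D) := (hC.smul t).add (hD.smul (1 - t))
  calc volume C ^ t * volume D ^ (1-t)
      = volume (e '' C) ^ t * volume (e '' D) ^ (1-t) := by
        rw [hvol C hC.isClosed.measurableSet, hvol D hD.isClosed.measurableSet]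
    _ ≤ volume (t • (e '' C) + (1-t) • (e '' D)) :=
        bm_step n bm _ _ hC' hD' (hCne.image e) (hDne.image e) t ht
    _ = volume (e '' (t • C + (1-t) • D)) := by rw [himg_add, himg_smul, himg_smul]
    _ = volume (t • C + (1-t) • D) := hvol _ hS.isClosed.measurableSet

lemma bm_all : ∀ n, BMdim n := by
  intro n
  induction n with
  | zero => exact bm_zero
  | succ k ih => exact bm_succ k ih

theorem stmt7 (n : ℕ) (A B : Set (ℝ × (Fin n → ℝ))) (t : ℝ) (ht : t ∈ Set.Ioo (0:ℝ) 1)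
    (hA : IsCompact A) (hB : IsCompact B)
    (lam γ γt : ℝ) (hlam : 0 < lam) (hγ : 0 < γ) (hγt : 0 < γt)
    (hnorm : γ ^ t * γt ^ (1 - t) = 1)
    (hAne : {x : ℝ | ENNReal.ofReal (γ * lam) < volume {y | (x, y) ∈ A}}.Nonempty)
    (hBne : {x : ℝ | ENNReal.ofReal (γt * lam) < volume {y | (x, y) ∈ B}}.Nonempty) :
    ENNReal.ofReal t * volume {x : ℝ | ENNReal.ofReal (γ * lam) < volume {y | (x, y) ∈ A}}
      + ENNReal.ofReal (1 - t) *
        volume {x : ℝ | ENNReal.ofReal (γt * lam) < volume {y | (x, y) ∈ B}}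
    ≤ volume {x : ℝ | ENNReal.ofReal lam < volume {y | (x, y) ∈ t • A + (1 - t) • B}} := by
  exact sliceLemma n (bm_all n) A B t ht hA hB lam γ γt hlam hγ hγt hnorm hAne hBne
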